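/- The K×K matrix P constructed by Algorithm 2 is a k-cyclic 2K/(K-kL+k)-regular (K, K, kL, (K-kL)(K-kL+k)/2) placement delivery array. -/

import Mathlib

/-- A generalized placement delivery array predicate: an `F × Kc` array
(entries `none` = star, `some s` = integer) whose integer alphabet is `[lo, hi)`,
satisfying: C1 (exactly `Z` stars per column), all integers lie in `[lo, hi)`,
C2 (every integer in `[lo, hi)` appears), and C3. -/
def isPDAgen (Kc F Z lo hi : ℕ) (P : ℕ → ℕ → Option ℕ) : Prop :=
  (∀ j < Kc, ((Finset.range F).filter (fun i => P i j = none)).card = Z) ∧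
  (∀ i < F, ∀ j < Kc, ∀ s : ℕ, P i j = some s → lo ≤ s ∧ s < hi) ∧
  (∀ s : ℕ, lo ≤ s → s < hi → ∃ i < F, ∃ j < Kc, P i j = some s) ∧
  (∀ i₁ j₁ i₂ j₂ s, i₁ < F → j₁ < Kc → i₂ < F → j₂ < Kc →
    P i₁ j₁ = some s → P i₂ j₂ = some s → (i₁, j₁) ≠ (i₂, j₂) →
    i₁ ≠ i₂ ∧ j₁ ≠ j₂ ∧ P i₁ j₂ = none ∧ P i₂ j₁ = none)

/-- A `(Kc, F, Z, S)` PDA with integer alphabet `[0, S)`. -/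
def isPDA (Kc F Z S : ℕ) (P : ℕ → ℕ → Option ℕ) : Prop :=
  isPDAgen Kc F Z 0 S P

/-- `g`-regularity on alphabet `[lo, hi)`: each integer appears exactly `g` times. -/
def isRegularGen (g Kc F lo hi : ℕ) (P : ℕ → ℕ → Option ℕ) : Prop :=
  ∀ s : ℕ, lo ≤ s → s < hi →
    (((Finset.range F) ×ˢ (Finset.range Kc)).filter
      (fun p => P p.1 p.2 = some s)).card = g

/-- `t`-cyclic: in each column the `Z` stars occupy (cyclically) consecutive rows,
and each column's starting star position is the previous column's shifted down by `t`. -/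
def isCyclic (t Kc F Z : ℕ) (P : ℕ → ℕ → Option ℕ) : Prop :=
  ∃ start : ℕ → ℕ,
    (∀ j < Kc, ∀ i < F, (P i j = none ↔ ∃ r < Z, i = (start j + r) % F)) ∧
    (∀ j : ℕ, j + 1 < Kc → start (j + 1) % F = (start j + t) % F)

/-- The integer values of the matrix `A` of procedure 1:
`aVal n 0 j = j - 1` and `aVal n (i+1) j = aVal n i j + (n - (i+1))`. -/
def aVal (n : ℕ) : ℕ → ℕ → ℕ
  | 0, j => j - 1
  | i + 1, j => aVal n i j + (n - (i + 1))

/-- The `(n+1) × (n+1)` matrix `A` of procedure 1: stars on and below the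
diagonal, integers `aVal n i j` above it. -/
def Amat (n i j : ℕ) : Option ℕ :=
  if j ≤ i then none else some (aVal n i j)

/-- The block matrix `P₁` of procedure 2, with `b` row/column blocks of size
`n+1`: block `A` when the column block equals the row block, `Aᵀ` when the
column block is the row block plus one (mod `b`), and all-star otherwise. -/
def P1mat (n b i j : ℕ) : Option ℕ :=
  if j / (n + 1) = i / (n + 1) then Amat n (i % (n + 1)) (j % (n + 1))
  else if j / (n + 1) = (i / (n + 1) + 1) % b then Amat n (j % (n + 1)) (i % (n + 1))
  else none

/-- The `K × (K/k)` matrix `P̃₁` of procedure 3: each row of `P₁` is expanded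
into `k` rows, with integer entries incremented by `S₁ = (K-kL)(K-kL+k)/(2k²)`
from one row to the next. -/
def Ptilde1 (K k L i j : ℕ) : Option ℕ :=
  (P1mat ((K - k * L) / k) (K / (K - k * L + k)) (i / k) j).map
    (fun s => s + (i % k) * ((K - k * L) * (K - k * L + k) / (2 * k ^ 2)))

/-- The `K × K` matrix `P` of procedure 4: concatenation of
`P̃₁, P̃₁ + S̃₁, …, P̃₁ + (k-1)S̃₁` where `S̃₁ = (K-kL)(K-kL+k)/(2k)`. -/
def Pfull (K k L i j : ℕ) : Option ℕ :=
  (Ptilde1 K k L i (j % (K / k))).map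
    (fun s => s + (j / (K / k)) * ((K - k * L) * (K - k * L + k) / (2 * k)))

-- row starts
def rs (n : ℕ) : ℕ → ℕ
  | 0 => 0
  | x + 1 => rs n x + (n - x)

lemma aVal_eq (n x y : ℕ) (h1 : x < y) (h2 : y ≤ n) :
    aVal n x y = rs n x + (y - x - 1) := by
  induction x with
  | zero => simp [aVal, rs]
  | succ x ih =>
    have hx : x < y := by omega
    rw [show x + 1 = x + 1 from rfl]
    simp only [aVal, rs, ih hx]
    omega

lemma rs_mono (n : ℕ) {x y : ℕ} (h : x ≤ y) : rs n x ≤ rs n y := by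
  induction y with
  | zero => simp_all
  | succ y ih =>
    rcases Nat.lt_or_ge x (y+1) with h'|h'
    · have := ih (by omega); simp [rs]; omega
    · have : x = y + 1 := by omega
      subst this; rfl

lemma two_rs (n : ℕ) : ∀ x ≤ n, 2 * rs n x + x * x = 2 * (n * x) + x := by
  intro x hx
  induction x with
  | zero => simp [rs]
  | succ x ih =>
    have h1 := ih (by omega)
    simp only [rs]
    obtain ⟨d, hd⟩ : ∃ d, n = x + d := ⟨n - x, by omega⟩
    subst hd
    simp only [Nat.add_sub_cancel_left]
    nlinarith [h1]

lemma aVal_lt (n T x y : ℕ) (hT : 2 * T = n * (n+1)) (h1 : x < y) (h2 : y ≤ n) :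
    aVal n x y < T := by
  rw [aVal_eq n x y h1 h2]
  have h3 : rs n (x+1) ≤ rs n n := rs_mono n (by omega)
  have h4 : rs n x + (n - x) = rs n (x+1) := rfl
  have h5 := two_rs n n (le_refl n)
  have h6 : n * (n+1) = n*n + n := by ring
  omega

lemma aVal_inj (n x y x' y' : ℕ) (h1 : x < y) (h2 : y ≤ n) (h1' : x' < y') (h2' : y' ≤ n)
    (h : aVal n x y = aVal n x' y') : x = x' ∧ y = y' := by
  rw [aVal_eq n x y h1 h2, aVal_eq n x' y' h1' h2'] at h
  have key : x = x' := by
    rcases lt_trichotomy x x' with hc|hc|hc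
    · exfalso
      have g1 : rs n (x+1) ≤ rs n x' := rs_mono n (by omega)
      have g2 : rs n x + (n - x) = rs n (x+1) := rfl
      omega
    · exact hc
    · exfalso
      have g1 : rs n (x'+1) ≤ rs n x := rs_mono n (by omega)
      have g2 : rs n x' + (n - x') = rs n (x'+1) := rfl
      omega
  subst key
  omega

lemma aVal_surj (n T a : ℕ) (hT : 2 * T = n * (n+1)) (ha : a < T) :
    ∃ x y, x < y ∧ y ≤ n ∧ aVal n x y = a := by
  have hrsn : rs n n = T := by
    have h5 := two_rs n n (le_refl n); nlinarith
  -- find x with rs n x ≤ a < rs n (x+1)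
  have main : ∀ x ≤ n, a < rs n x → ∃ t, t < x ∧ rs n t ≤ a ∧ a < rs n (t+1) := by
    intro x
    induction x with
    | zero => intro _ h; simp [rs] at h
    | succ x ih =>
      intro hx h
      rcases Nat.lt_or_ge a (rs n x) with h'|h'
      · obtain ⟨t, ht⟩ := ih (by omega) h'
        exact ⟨t, by omega, ht.2⟩
      · exact ⟨x, by omega, h', h⟩
  obtain ⟨t, ht1, ht2, ht3⟩ := main n (le_refl n) (by omega)
  have g2 : rs n t + (n - t) = rs n (t+1) := rfl
  refine ⟨t, t + 1 + (a - rs n t), by omega, by omega, ?_⟩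
  rw [aVal_eq n t _ (by omega) (by omega)]
  omega


lemma mod_shift (F a : ℕ) (hF : 0 < F) (h : a < 2*F) :
    a % F = if a < F then a else a - F := by
  split_ifs with h'
  · exact Nat.mod_eq_of_lt h'
  · rw [Nat.mod_eq_sub_mod (by omega), Nat.mod_eq_of_lt (by omega)]

lemma mod_cancel {F a b j : ℕ} (ha : a < F) (hb : b < F)
    (h : (j + a) % F = (j + b) % F) : a = b := by
  have h2 : a ≡ b [MOD F] := (Nat.ModEq.add_left_cancel' j h)
  have := Nat.ModEq.eq_of_lt_of_lt h2 ha hb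
  exact this

lemma mod_mul_helper (k F A c : ℕ) (hc : c < k) (hF : 0 < F) :
    (k*A + c) % (k*F) = k*(A % F) + c := by
  have h1 : k*A + c = k*F*(A/F) + (k*(A%F)+c) := by
    conv_lhs => rw [← Nat.div_add_mod A F]
    ring
  rw [h1, Nat.mul_add_mod]
  have h2 : A % F < F := Nat.mod_lt _ hF
  have h3 : k*(A%F) + c < k*F := by
    calc k*(A%F) + c < k*(A%F) + k := by omega
    _ = k*(A%F + 1) := by ring
    _ ≤ k*F := Nat.mul_le_mul_left _ (by omega)
  exact Nat.mod_eq_of_lt h3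

lemma exists_r_iff (F Z i j : ℕ) (hZ : 0 < Z) (hZF : Z ≤ F) (hi : i < F) (hj : j < F) :
    (∃ r < Z, i = (j + r) % F) ↔
      ¬(1 ≤ (j + F - i) % F ∧ (j + F - i) % F ≤ F - Z) := by
  have hF : 0 < F := by omega
  set e := (j + F - i) % F with he
  set d := (i + F - j) % F with hd
  have hde : d = if i + F - j < F then i + F - j else i + F - j - F :=
    mod_shift F _ hF (by omega)
  have hee : e = if j + F - i < F then j + F - i else j + F - i - F :=
    mod_shift F _ hF (by omega)
  have hdlt : d < F := by rw [hde]; split_ifs <;> omega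
  have helt : e < F := by rw [hee]; split_ifs <;> omega
  have hsum : (d = 0 ∧ e = 0) ∨ d + e = F := by
    rw [hde, hee]; split_ifs <;> omega
  have hij : i = (j + d) % F := by
    rw [hde]; split_ifs with h'
    · rw [show j + (i + F - j) = i + F by omega, Nat.add_mod_right, Nat.mod_eq_of_lt hi]
    · rw [show j + (i + F - j - F) = i by omega, Nat.mod_eq_of_lt hi]
  constructor
  · rintro ⟨r, hr, hrr⟩
    have : r = d := mod_cancel (by omega) hdlt (hrr.symm.trans hij)
    omega
  · intro h
    refine ⟨d, ?_, hij⟩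
    omega




lemma Amat_none_iff (n x y : ℕ) : Amat n x y = none ↔ y ≤ x := by
  unfold Amat; split_ifs <;> simp_all

lemma Amat_some_iff (n x y a : ℕ) : Amat n x y = some a ↔ x < y ∧ a = aVal n x y := by
  unfold Amat; split_ifs with h <;> simp_all <;> omega

lemma div_mod_eval (n B x : ℕ) (hx : x ≤ n) :
    (B*(n+1)+x)/(n+1) = B ∧ (B*(n+1)+x)%(n+1) = x := by
  constructor
  · rw [Nat.add_comm, Nat.add_mul_div_right _ _ (by omega), Nat.div_eq_of_lt (by omega), Nat.zero_add]
  · rw [Nat.add_comm, Nat.add_mul_mod_self_right, Nat.mod_eq_of_lt (by omega)]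

lemma decomp (n b i : ℕ) (h : i < b*(n+1)) :
    i/(n+1) < b ∧ i%(n+1) ≤ n ∧ i = (i/(n+1))*(n+1) + i%(n+1) := by
  refine ⟨?_, ?_, ?_⟩
  · rw [Nat.div_lt_iff_lt_mul (by omega)]; omega
  · have := Nat.mod_lt i (show 0 < n+1 by omega); omega
  · rw [Nat.mul_comm]; exact (Nat.div_add_mod i (n+1)).symm

lemma blocks_inj {n B x B' x' : ℕ} (hx : x ≤ n) (hx' : x' ≤ n)
    (h : B*(n+1)+x = B'*(n+1)+x') : B = B' ∧ x = x' := by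
  have h1 := (div_mod_eval n B x hx).1
  have h2 := (div_mod_eval n B' x' hx').1
  have h3 := (div_mod_eval n B x hx).2
  have h4 := (div_mod_eval n B' x' hx').2
  rw [h] at h1 h3
  exact ⟨h1.symm.trans h2, h3.symm.trans h4⟩

lemma bsucc_lt {b B : ℕ} (hb : 0 < b) : (B+1)%b < b := Nat.mod_lt _ hb

lemma bsucc_ne {b B : ℕ} (hb : 2 ≤ b) (hB : B < b) : (B+1)%b ≠ B := by
  rcases Nat.lt_or_ge (B+1) b with h|h
  · rw [Nat.mod_eq_of_lt h]; omega
  · have : B + 1 = b := by omega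
    rw [this, Nat.mod_self]; omega

lemma bsucc_inj {b B B' : ℕ} (hB : B < b) (hB' : B' < b) (h : (B+1)%b = (B'+1)%b) :
    B = B' := by
  rcases Nat.lt_or_ge (B+1) b with h1|h1 <;> rcases Nat.lt_or_ge (B'+1) b with h2|h2
  · rw [Nat.mod_eq_of_lt h1, Nat.mod_eq_of_lt h2] at h; omega
  · have e2 : B' + 1 = b := by omega
    rw [Nat.mod_eq_of_lt h1, e2, Nat.mod_self] at h; omega
  · have e1 : B + 1 = b := by omega
    rw [e1, Nat.mod_self, Nat.mod_eq_of_lt h2] at h; omega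
  · omega

lemma P1_eval (n b B B' x y : ℕ) (hx : x ≤ n) (hy : y ≤ n) :
    P1mat n b (B*(n+1)+x) (B'*(n+1)+y) =
      if B' = B then Amat n x y else if B' = (B+1)%b then Amat n y x else none := by
  unfold P1mat
  rw [(div_mod_eval n B x hx).1, (div_mod_eval n B x hx).2,
      (div_mod_eval n B' y hy).1, (div_mod_eval n B' y hy).2]

lemma P1_some_iff (n b : ℕ) (hb : 2 ≤ b) {i j a : ℕ}
    (hi : i < b*(n+1)) (hj : j < b*(n+1)) :
    P1mat n b i j = some a ↔
      ((∃ B < b, ∃ x y, x < y ∧ y ≤ n ∧ a = aVal n x y ∧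
          i = B*(n+1)+x ∧ j = B*(n+1)+y) ∨
       (∃ B < b, ∃ x y, x < y ∧ y ≤ n ∧ a = aVal n x y ∧
          i = B*(n+1)+y ∧ j = ((B+1)%b)*(n+1)+x)) := by
  obtain ⟨hI, hxle, hieq⟩ := decomp n b i hi
  obtain ⟨hJ, hyle, hjeq⟩ := decomp n b j hj
  set I := i/(n+1) with hIdef
  set J := j/(n+1) with hJdef
  set x := i%(n+1) with hxdef
  set y := j%(n+1) with hydef
  constructor
  · intro h
    unfold P1mat at h
    rw [← hIdef, ← hJdef, ← hxdef, ← hydef] at h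
    split_ifs at h with h1 h2
    · rw [Amat_some_iff] at h
      exact Or.inl ⟨I, hI, x, y, h.1, hyle, h.2, hieq, by rw [hjeq, h1]⟩
    · rw [Amat_some_iff] at h
      exact Or.inr ⟨I, hI, y, x, h.1, hxle, h.2, hieq, by rw [hjeq, h2]⟩
  · rintro (⟨B, hB, x', y', hxy, hyn, ha, hie, hje⟩ | ⟨B, hB, x', y', hxy, hyn, ha, hie, hje⟩)
    · rw [hie, hje, P1_eval n b B B x' y' (by omega) hyn, if_pos rfl, Amat_some_iff]
      exact ⟨hxy, ha⟩
    · rw [hie, hje, P1_eval n b B ((B+1)%b) y' x' hyn (by omega),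
        if_neg (bsucc_ne hb hB), if_pos rfl, Amat_some_iff]
      exact ⟨hxy, ha⟩




lemma P1_none_iff (n b : ℕ) (hb : 2 ≤ b) {i j : ℕ}
    (hi : i < b*(n+1)) (hj : j < b*(n+1)) :
    P1mat n b i j = none ↔
      ¬(1 ≤ (j + b*(n+1) - i) % (b*(n+1)) ∧ (j + b*(n+1) - i) % (b*(n+1)) ≤ n) := by
  have hF2 : 2*(n+1) ≤ b*(n+1) := Nat.mul_le_mul_right _ hb
  obtain ⟨hI, hxle, hieq⟩ := decomp n b i hi
  obtain ⟨hJ, hyle, hjeq⟩ := decomp n b j hj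
  set I := i/(n+1) with hIdef
  set J := j/(n+1) with hJdef
  set x := i%(n+1) with hxdef
  set y := j%(n+1) with hydef
  have hee := mod_shift (b*(n+1)) (j + b*(n+1) - i) (by omega) (by omega)
  set e := (j + b*(n+1) - i) % (b*(n+1)) with heDef
  unfold P1mat
  rw [← hIdef, ← hJdef, ← hxdef, ← hydef]
  clear_value I J x y e
  clear hIdef hJdef hxdef hydef heDef
  split_ifs with h1 h2
  · -- diagonal block
    rw [Amat_none_iff]
    rw [h1] at hjeq
    split_ifs at hee <;> omega
  · -- transpose block
    rw [Amat_none_iff]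
    rcases Nat.lt_or_ge (I+1) b with hc|hc
    · rw [Nat.mod_eq_of_lt hc] at h2
      rw [h2] at hjeq
      have hmm : (I+1)*(n+1) = I*(n+1)+(n+1) := by ring
      split_ifs at hee <;> omega
    · have hI1 : I + 1 = b := by omega
      have hJ0 : J = 0 := by rw [h2, hI1, Nat.mod_self]
      rw [hJ0] at hjeq
      have hbm : b*(n+1) = I*(n+1)+(n+1) := by rw [← hI1]; ring
      split_ifs at hee <;> omega
  · -- far blocks: entry is star, show e ∉ [1,n]
    simp only [true_iff, iff_true]
    rcases lt_trichotomy J I with hc|hc|hc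
    · have hIJ : I ≤ J + (b-2) := by
        by_contra hcon
        push_neg at hcon
        have hI1 : I + 1 = b := by omega
        have hJ0 : J = 0 := by omega
        exact h2 (by rw [hJ0, hI1, Nat.mod_self])
      have m1 : I*(n+1) ≤ (J + (b-2))*(n+1) := Nat.mul_le_mul_right _ hIJ
      have m2 : (J+(b-2))*(n+1) = J*(n+1) + (b-2)*(n+1) := by ring
      have m3 : (b-2)*(n+1) + 2*(n+1) = b*(n+1) := by
        have hb2 : (b-2) + 2 = b := by omega
        calc (b-2)*(n+1) + 2*(n+1) = ((b-2)+2)*(n+1) := by ring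
        _ = b*(n+1) := by rw [hb2]
      have m4 : J*(n+1) + (n+1) ≤ I*(n+1) := by
        have := Nat.mul_le_mul_right (n+1) (show J+1 ≤ I by omega)
        calc J*(n+1) + (n+1) = (J+1)*(n+1) := by ring
        _ ≤ I*(n+1) := this
      split_ifs at hee <;> omega
    · exact absurd hc h1
    · have hJI : I + 2 ≤ J := by
        by_contra hcon
        push_neg at hcon
        have hJc : J = I + 1 := by omega
        exact h2 (by rw [hJc, Nat.mod_eq_of_lt (by omega)])
      have m1 : (I+2)*(n+1) ≤ J*(n+1) := Nat.mul_le_mul_right _ hJI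
      have m2 : (I+2)*(n+1) = I*(n+1) + 2*(n+1) := by ring
      split_ifs at hee <;> omega

lemma P1_C3 (n b : ℕ) (hb : 2 ≤ b) {p₁ c₁ p₂ c₂ a : ℕ}
    (h1 : p₁ < b*(n+1)) (h2 : c₁ < b*(n+1)) (h3 : p₂ < b*(n+1)) (h4 : c₂ < b*(n+1))
    (o1 : P1mat n b p₁ c₁ = some a) (o2 : P1mat n b p₂ c₂ = some a)
    (hne : (p₁, c₁) ≠ (p₂, c₂)) :
    p₁ ≠ p₂ ∧ c₁ ≠ c₂ ∧ P1mat n b p₁ c₂ = none ∧ P1mat n b p₂ c₁ = none := by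
  rcases (P1_some_iff n b hb h1 h2).1 o1 with
    ⟨B1, hB1, x, y, hxy, hyn, ha, hp1, hc1⟩ | ⟨B1, hB1, x, y, hxy, hyn, ha, hp1, hc1⟩ <;>
  rcases (P1_some_iff n b hb h3 h4).1 o2 with
    ⟨B2, hB2, x', y', hxy', hyn', ha', hp2, hc2⟩ | ⟨B2, hB2, x', y', hxy', hyn', ha', hp2, hc2⟩ <;>
  obtain ⟨rfl, rfl⟩ := aVal_inj n x y x' y' hxy hyn hxy' hyn' (ha.symm.trans ha') <;>
  clear ha' hxy' hyn' o1 o2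
  · -- diag / diag
    have hBB : B1 ≠ B2 := by
      rintro rfl; exact hne (by rw [hp1, hp2, hc1, hc2])
    refine ⟨?_, ?_, ?_, ?_⟩
    · intro h; rw [hp1, hp2] at h
      exact hBB (blocks_inj (by omega) (by omega) h).1
    · intro h; rw [hc1, hc2] at h
      exact hBB (blocks_inj hyn hyn h).1
    · rw [hp1, hc2, P1_eval n b B1 B2 x y (by omega) hyn]
      split_ifs with g1 g2
      · exact absurd g1.symm hBB
      · exact (Amat_none_iff n y x).2 (by omega)
      · rfl
    · rw [hp2, hc1, P1_eval n b B2 B1 x y (by omega) hyn]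
      split_ifs with g1 g2
      · exact absurd g1 hBB
      · exact (Amat_none_iff n y x).2 (by omega)
      · rfl
  · -- diag / off
    refine ⟨?_, ?_, ?_, ?_⟩
    · intro h; rw [hp1, hp2] at h
      exact absurd (blocks_inj (by omega) hyn h).2 (by omega)
    · intro h; rw [hc1, hc2] at h
      exact absurd (blocks_inj hyn (by omega) h).2 (by omega)
    · rw [hp1, hc2, P1_eval n b B1 ((B2+1)%b) x x (by omega) (by omega)]
      split_ifs <;> first | rfl | exact (Amat_none_iff n x x).2 le_rfl
    · rw [hp2, hc1, P1_eval n b B2 B1 y y hyn hyn]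
      split_ifs <;> first | rfl | exact (Amat_none_iff n y y).2 le_rfl
  · -- off / diag
    refine ⟨?_, ?_, ?_, ?_⟩
    · intro h; rw [hp1, hp2] at h
      exact absurd (blocks_inj hyn (by omega) h).2 (by omega)
    · intro h; rw [hc1, hc2] at h
      exact absurd (blocks_inj (by omega) hyn h).2 (by omega)
    · rw [hp1, hc2, P1_eval n b B1 B2 y y hyn hyn]
      split_ifs <;> first | rfl | exact (Amat_none_iff n y y).2 le_rfl
    · rw [hp2, hc1, P1_eval n b B2 ((B1+1)%b) x x (by omega) (by omega)]
      split_ifs <;> first | rfl | exact (Amat_none_iff n x x).2 le_rfl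
  · -- off / off
    have hBB : B1 ≠ B2 := by
      rintro rfl; exact hne (by rw [hp1, hp2, hc1, hc2])
    refine ⟨?_, ?_, ?_, ?_⟩
    · intro h; rw [hp1, hp2] at h
      exact hBB (blocks_inj hyn hyn h).1
    · intro h; rw [hc1, hc2] at h
      exact hBB (bsucc_inj hB1 hB2 (blocks_inj (by omega) (by omega) h).1)
    · rw [hp1, hc2, P1_eval n b B1 ((B2+1)%b) y x hyn (by omega)]
      split_ifs with g1 g2
      · exact (Amat_none_iff n y x).2 (by omega)
      · exact absurd (bsucc_inj hB2 hB1 g2) hBB.symm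
      · rfl
    · rw [hp2, hc1, P1_eval n b B2 ((B1+1)%b) y x hyn (by omega)]
      split_ifs with g1 g2
      · exact (Amat_none_iff n y x).2 (by omega)
      · exact absurd (bsucc_inj hB1 hB2 g2) hBB
      · rfl

lemma key_facts (K k L n b T : ℕ) (hk : 0 < k) (hKL : k * L < K)
    (hdk : k ∣ K) (hdv : (K - k * L + k) ∣ K)
    (hn : n = (K - k * L) / k) (hbd : b = K / (K - k * L + k))
    (hT : T = n * (n + 1) / 2) :
    K = k * (b * (n+1)) ∧ K / k = b * (n+1) ∧ 2 * T = n * (n+1) ∧ 1 ≤ n ∧ 1 ≤ b ∧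
    (K - k*L) * (K - k*L + k) / (2 * k^2) = T ∧
    (K - k*L) * (K - k*L + k) / (2 * k) = k * T ∧
    (K - k*L) * (K - k*L + k) / 2 = k^2 * T ∧
    k * (b*(n+1) - n) = k * L ∧ n ≤ b*(n+1) ∧ 2*K/(K - k*L + k) = 2*b := by
  have hmdvd : k ∣ (K - k * L) := Nat.dvd_sub hdk (Dvd.intro L rfl)
  have hm : K - k * L = k * n := by rw [hn, Nat.mul_div_cancel' hmdvd]
  have hv : K - k * L + k = k * (n+1) := by rw [hm]; ring
  have hKb : K = (K - k * L + k) * b := by rw [hbd, Nat.mul_div_cancel' hdv]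
  have hK : K = k * (b * (n+1)) := by rw [hKb, hv]; ring
  have hT2 : 2 * T = n * (n+1) := by
    rw [hT, Nat.two_mul_div_two_of_even (Nat.even_mul_succ_self n)]
  have hn1 : 1 ≤ n := by
    rcases Nat.eq_zero_or_pos n with h|h
    · subst h; rw [Nat.mul_zero] at hm; omega
    · exact h
  have hb1 : 1 ≤ b := by
    rcases Nat.eq_zero_or_pos b with h|h
    · rw [h, Nat.mul_zero] at hKb; omega
    · exact h
  have hprod : (K - k*L) * (K - k*L + k) = 2 * k^2 * T := by
    rw [hv, hm]
    have h1 : (k*n) * (k*(n+1)) = k^2 * (n*(n+1)) := by ring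
    rw [h1, ← hT2]; ring
  have hnb : n ≤ b*(n+1) := by
    have : 1 * (n+1) ≤ b * (n+1) := Nat.mul_le_mul_right _ hb1
    omega
  refine ⟨hK, ?_, hT2, hn1, hb1, ?_, ?_, ?_, ?_, hnb, ?_⟩
  · rw [hK, Nat.mul_div_cancel_left _ hk]
  · rw [hprod, Nat.mul_div_cancel_left _ (by positivity)]
  · rw [hprod, show 2 * k^2 * T = (2*k) * (k*T) by ring,
      Nat.mul_div_cancel_left _ (by positivity)]
  · rw [hprod, show 2 * k^2 * T = 2 * (k^2*T) by ring,
      Nat.mul_div_cancel_left _ (by positivity)]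
  · have hsplit : b*(n+1) = (b*(n+1) - n) + n := by omega
    have hKs : K = k * (b*(n+1) - n) + k * n := by
      conv_lhs => rw [hK, hsplit]
      rw [Nat.mul_add]
    omega
  · have h2K : 2*K = (K - k*L + k)*(2*b) := by
      conv_lhs => rw [hKb]
      ring
    rw [h2K, Nat.mul_div_cancel_left _ (by omega)]

lemma Pfull_none_iff (K k L i j : ℕ) :
    Pfull K k L i j = none ↔
      P1mat ((K - k * L) / k) (K / (K - k * L + k)) (i / k) (j % (K / k)) = none := by
  unfold Pfull Ptilde1
  simp [Option.map_eq_none_iff]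

lemma Pfull_some_iff (K k L n b T : ℕ) (hk : 0 < k) (hKL : k * L < K)
    (hdk : k ∣ K) (hdv : (K - k * L + k) ∣ K)
    (hn : n = (K - k * L) / k) (hbd : b = K / (K - k * L + k))
    (hT : T = n * (n + 1) / 2) (i j s : ℕ) :
    Pfull K k L i j = some s ↔
      ∃ a, P1mat n b (i / k) (j % (K / k)) = some a ∧
        s = a + (i % k) * T + (j / (K / k)) * (k * T) := by
  obtain ⟨hK, hKk, hT2, hn1, hb1, hS1, hSk, hS, hZ, hnb, hg⟩ :=
    key_facts K k L n b T hk hKL hdk hdv hn hbd hT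
  unfold Pfull Ptilde1
  rw [← hn, ← hbd, hS1, hSk]
  cases h : P1mat n b (i / k) (j % (K / k)) with
  | none => simp [h]
  | some a => simp [h]; constructor
              · intro he; omega
              · intro he; omega

lemma expand_rows (k F i j₁ Z : ℕ) (hk : 0 < k) (hF : 0 < F) (hi : i < k*F)
    (hj : j₁ < F) (hZ : Z ≤ F) :
    (∃ r < Z, i/k = (j₁ + r) % F) ↔ ∃ r' < k*Z, i = (k*j₁ + r') % (k*F) := by
  constructor
  · rintro ⟨r, hr, hre⟩
    refine ⟨k*r + i%k, ?_, ?_⟩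
    · have h1 : i % k < k := Nat.mod_lt _ hk
      have h2 : k*(r+1) ≤ k*Z := Nat.mul_le_mul_left _ (by omega)
      have h3 : k*(r+1) = k*r + k := by ring
      omega
    · have h0 : k*j₁ + (k*r + i%k) = k*(j₁+r) + i%k := by ring
      rw [h0, mod_mul_helper k F (j₁+r) (i%k) (Nat.mod_lt _ hk) hF, ← hre,
        Nat.div_add_mod]
  · rintro ⟨r', hr', hre⟩
    have h0 : k*j₁ + r' = k*(j₁ + r'/k) + r'%k := by
      have := Nat.div_add_mod r' k
      calc k*j₁ + r' = k*j₁ + (k*(r'/k) + r'%k) := by rw [this]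
      _ = k*(j₁ + r'/k) + r'%k := by ring
    rw [h0, mod_mul_helper k F (j₁ + r'/k) (r'%k) (Nat.mod_lt _ hk) hF] at hre
    refine ⟨r'/k, ?_, ?_⟩
    · exact Nat.div_lt_of_lt_mul (by omega)
    · rw [hre, Nat.mul_add_div hk, Nat.div_eq_of_lt (Nat.mod_lt _ hk), Nat.add_zero]

/-- The `K × K` matrix `P` constructed by Algorithm 2 is a `k`-cyclic
`2K/(K-kL+k)`-regular `(K, K, kL, (K-kL)(K-kL+k)/2)` PDA. -/
theorem stmt12 (K k L : ℕ) (hk : 0 < k) (hL : 0 < L) (hKL : k * L < K)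
    (hdk : k ∣ K) (hdv : (K - k * L + k) ∣ K)
    (hb : 2 ≤ K / (K - k * L + k)) :
    isPDA K K (k * L) ((K - k * L) * (K - k * L + k) / 2) (Pfull K k L) ∧
    isRegularGen (2 * K / (K - k * L + k)) K K 0
      ((K - k * L) * (K - k * L + k) / 2) (Pfull K k L) ∧
    isCyclic k K K (k * L) (Pfull K k L) := by
  set n := (K - k * L) / k with hn
  set b := K / (K - k * L + k) with hbd
  set T := n * (n + 1) / 2 with hT
  obtain ⟨hK, hKk, hT2, hn1, hb1, hS1, hSk, hS, hZ, hnb, hg⟩ :=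
    key_facts K k L n b T hk hKL hdk hdv hn hbd hT
  have hb' : 2 ≤ b := hb
  have hnb1 : n + 1 ≤ b * (n+1) := by
    have h := Nat.mul_le_mul_right (n+1) hb1
    rwa [Nat.one_mul] at h
  have hFpos : 0 < b*(n+1) := by omega
  have hKpos : 0 < K := by omega
  have hTpos : 0 < T := by
    have h := Nat.mul_le_mul hn1 (show 2 ≤ n+1 by omega)
    omega
  have hKdk : 0 < K / k := by rw [hKk]; omega
  have hKk' : K = (K/k) * k := by rw [hKk, hK]; ring
  have hdivF : ∀ i, i < K → i / k < b*(n+1) := fun i hi =>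
    Nat.div_lt_of_lt_mul (by rw [← hK]; exact hi)
  have hmodF : ∀ j : ℕ, j % (K/k) < b*(n+1) := fun j => by
    rw [← hKk]; exact Nat.mod_lt _ hKdk
  have hdivq : ∀ j, j < K → j / (K/k) < k := fun j hj =>
    Nat.div_lt_of_lt_mul (by rw [← hKk']; exact hj)
  have starChar : ∀ i < K, ∀ j < K,
      (Pfull K k L i j = none ↔ ∃ r < k*L, i = (k*(j % (K/k)) + r) % K) := by
    intro i hi j hj
    have h1 := hdivF i hi
    have h2 := hmodF j
    have step1 := Pfull_none_iff K k L i j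
    rw [← hn, ← hbd] at step1
    have step2 := P1_none_iff n b hb' h1 h2
    have step3 := exists_r_iff (b*(n+1)) (b*(n+1)-n) (i/k) (j % (K/k))
      (by omega) (by omega) h1 h2
    rw [show b*(n+1) - (b*(n+1) - n) = n from by omega] at step3
    have step4 := expand_rows k (b*(n+1)) i (j % (K/k)) (b*(n+1)-n) hk hFpos
      (by rw [← hK]; exact hi) h2 (by omega)
    rw [hZ, ← hK] at step4
    exact step1.trans (step2.trans (step3.symm.trans step4))
  have someChar : ∀ i j s, Pfull K k L i j = some s ↔
      ∃ a, P1mat n b (i/k) (j % (K/k)) = some a ∧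
        s = a + (i % k) * T + (j / (K/k)) * (k*T) :=
    fun i j s => Pfull_some_iff K k L n b T hk hKL hdk hdv hn hbd hT i j s
  have haT : ∀ {p c a : ℕ}, p < b*(n+1) → c < b*(n+1) → P1mat n b p c = some a → a < T := by
    intro p c a hp hc h
    rcases (P1_some_iff n b hb' hp hc).1 h with
      ⟨B, _, x, y, hxy, hyn, ha, _, _⟩ | ⟨B, _, x, y, hxy, hyn, ha, _, _⟩ <;>
      (rw [ha]; exact aVal_lt n T x y hT2 hxy hyn)
  have uniq : ∀ a r q a' r' q' : ℕ, a < T → a' < T → r < k → r' < k → q < k → q' < k →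
      a + r*T + q*(k*T) = a' + r'*T + q'*(k*T) → a = a' ∧ r = r' ∧ q = q' := by
    intro a r q a' r' q' ha ha' hr hr' hq hq' heq
    have m1 : (a + r*T + q*(k*T)) % T = a := by
      rw [show a + r*T + q*(k*T) = a + (r + q*k)*T from by ring,
        Nat.add_mul_mod_self_right, Nat.mod_eq_of_lt ha]
    have m2 : (a' + r'*T + q'*(k*T)) % T = a' := by
      rw [show a' + r'*T + q'*(k*T) = a' + (r' + q'*k)*T from by ring,
        Nat.add_mul_mod_self_right, Nat.mod_eq_of_lt ha']
    have haa : a = a' := by rw [← m1, ← m2, heq]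
    have e2 : (r + q*k)*T = (r' + q'*k)*T := by
      have e1 : r*T + q*(k*T) = r'*T + q'*(k*T) := by omega
      calc (r + q*k)*T = r*T + q*(k*T) := by ring
      _ = r'*T + q'*(k*T) := e1
      _ = (r' + q'*k)*T := by ring
    have e3 : r + q*k = r' + q'*k := Nat.eq_of_mul_eq_mul_right hTpos e2
    have e4 : (r + q*k) % k = r := by rw [Nat.add_mul_mod_self_right, Nat.mod_eq_of_lt hr]
    have e5 : (r' + q'*k) % k = r' := by rw [Nat.add_mul_mod_self_right, Nat.mod_eq_of_lt hr']
    have err : r = r' := by rw [← e4, ← e5, e3]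
    refine ⟨haa, err, ?_⟩
    have e6 : q*k = q'*k := by omega
    exact Nat.eq_of_mul_eq_mul_right hk e6
  refine ⟨⟨?_, ?_, ?_, ?_⟩, ?_, ?_⟩
  · -- C1
    intro j hj
    have himg : (Finset.range K).filter (fun i => Pfull K k L i j = none) =
        (Finset.range (k*L)).image (fun r => (k*(j % (K/k)) + r) % K) := by
      ext i
      simp only [Finset.mem_filter, Finset.mem_range, Finset.mem_image]
      constructor
      · rintro ⟨hiK, hstar⟩
        obtain ⟨r, hr, hre⟩ := (starChar i hiK j hj).1 hstar
        exact ⟨r, hr, hre.symm⟩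
      · rintro ⟨r, hr, hre⟩
        have hiK : i < K := by rw [← hre]; exact Nat.mod_lt _ hKpos
        exact ⟨hiK, (starChar i hiK j hj).2 ⟨r, hr, hre.symm⟩⟩
    rw [himg, Finset.card_image_of_injOn, Finset.card_range]
    intro r hr r' hr' hrr
    simp only [Finset.mem_coe, Finset.mem_range] at hr hr'
    exact mod_cancel (show r < K from by omega) (show r' < K from by omega) hrr
  · -- bounds
    intro i hi j hj s hs
    obtain ⟨a, hP, hseq⟩ := (someChar i j s).1 hs
    have haT' : a < T := haT (hdivF i hi) (hmodF j) hP
    refine ⟨Nat.zero_le _, ?_⟩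
    rw [hS]
    have e1 : (i%k) * T ≤ (k-1) * T :=
      Nat.mul_le_mul_right _ (by have := Nat.mod_lt i hk; omega)
    have e2 : (j/(K/k)) * (k*T) ≤ (k-1) * (k*T) :=
      Nat.mul_le_mul_right _ (by have := hdivq j hj; omega)
    have e3 : T + (k-1)*T + (k-1)*(k*T) = k^2*T := by
      obtain ⟨k', rfl⟩ : ∃ k', k = k'+1 := ⟨k-1, by omega⟩
      simp only [Nat.add_sub_cancel]
      ring
    omega
  · -- C2
    intro s _ hsS
    rw [hS] at hsS
    have hkT : 0 < k*T := by positivity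
    set q := s / (k*T) with hqd
    set r := (s % (k*T)) / T with hrd
    set a := s % T with had
    clear_value q r a
    have hq : q < k := by
      rw [hqd]
      apply Nat.div_lt_of_lt_mul
      have e : (k*T)*k = k^2*T := by ring
      omega
    have hr : r < k := by
      rw [hrd]
      apply Nat.div_lt_of_lt_mul
      have h1 : s % (k*T) < k*T := Nat.mod_lt _ hkT
      have h2 : T*k = k*T := by ring
      omega
    have ha : a < T := by rw [had]; exact Nat.mod_lt _ hTpos
    have hdecomp : s = a + r*T + q*(k*T) := by
      rw [hqd, hrd, had]
      have d1 := Nat.div_add_mod s (k*T)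
      have d2 := Nat.div_add_mod (s % (k*T)) T
      have d3 : s % (k*T) % T = s % T := Nat.mod_mod_of_dvd s ⟨k, by ring⟩
      have c1 : (k*T)*(s/(k*T)) = s/(k*T)*(k*T) := by ring
      have c2 : T*(s%(k*T)/T) = (s%(k*T)/T)*T := by ring
      omega
    obtain ⟨x, y, hxy, hyn, hav⟩ := aVal_surj n T a hT2 ha
    have e3 : y < K/k := by rw [hKk]; omega
    refine ⟨k*x + r, ?_, y + q*(K/k), ?_, ?_⟩
    · have e1 : k*(x+1) ≤ k*(b*(n+1)) := Nat.mul_le_mul_left _ (by omega)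
      have e2 : k*(x+1) = k*x + k := by ring
      omega
    · have e1 : (q+1)*(K/k) ≤ k*(K/k) := Nat.mul_le_mul_right _ (by omega)
      have e2 : (q+1)*(K/k) = q*(K/k) + K/k := by ring
      have e4 : k*(K/k) = K := by rw [hKk]; exact hK.symm
      omega
    · rw [someChar]
      have drow : (k*x + r)/k = x := by
        rw [Nat.mul_add_div hk, Nat.div_eq_of_lt hr, Nat.add_zero]
      have mrow : (k*x + r)%k = r := by
        rw [Nat.mul_add_mod, Nat.mod_eq_of_lt hr]
      have mcol : (y + q*(K/k)) % (K/k) = y := by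
        rw [Nat.add_mul_mod_self_right, Nat.mod_eq_of_lt e3]
      have dcol : (y + q*(K/k)) / (K/k) = q := by
        rw [Nat.add_mul_div_right _ _ hKdk, Nat.div_eq_of_lt e3, Nat.zero_add]
      rw [drow, mrow, mcol, dcol]
      refine ⟨a, ?_, hdecomp⟩
      have hEv := P1_eval n b 0 0 x y (by omega) hyn
      simp only [Nat.zero_mul, Nat.zero_add] at hEv
      rw [hEv]
      simp only [if_true]
      exact (Amat_some_iff n x y a).2 ⟨hxy, hav.symm⟩
  · -- C3
    intro i₁ j₁ i₂ j₂ s hi1 hj1 hi2 hj2 hs1 hs2 hne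
    obtain ⟨a₁, hP1, he1⟩ := (someChar i₁ j₁ s).1 hs1
    obtain ⟨a₂, hP2, he2⟩ := (someChar i₂ j₂ s).1 hs2
    have hp1F := hdivF i₁ hi1
    have hp2F := hdivF i₂ hi2
    have hc1F := hmodF j₁
    have hc2F := hmodF j₂
    obtain ⟨haa, hrr, hqq⟩ := uniq a₁ (i₁%k) (j₁/(K/k)) a₂ (i₂%k) (j₂/(K/k))
      (haT hp1F hc1F hP1) (haT hp2F hc2F hP2) (Nat.mod_lt _ hk) (Nat.mod_lt _ hk)
      (hdivq j₁ hj1) (hdivq j₂ hj2) (by rw [← he1, ← he2])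
    rw [haa] at hP1
    have hpcne : (i₁/k, j₁ % (K/k)) ≠ (i₂/k, j₂ % (K/k)) := by
      intro h
      apply hne
      rw [Prod.mk.injEq] at h ⊢
      constructor
      · have d1 := Nat.div_add_mod i₁ k
        rw [h.1, hrr] at d1
        have d2 := Nat.div_add_mod i₂ k
        omega
      · have d1 := Nat.div_add_mod j₁ (K/k)
        rw [h.2, hqq] at d1
        have d2 := Nat.div_add_mod j₂ (K/k)
        omega
    obtain ⟨hpne, hcne, hcross1, hcross2⟩ :=
      P1_C3 n b hb' hp1F hc1F hp2F hc2F hP1 hP2 hpcne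
    refine ⟨?_, ?_, ?_, ?_⟩
    · intro h; exact hpne (by rw [h])
    · intro h; exact hcne (by rw [h])
    · rw [Pfull_none_iff, ← hn, ← hbd]; exact hcross1
    · rw [Pfull_none_iff, ← hn, ← hbd]; exact hcross2
  · -- regularity
    intro s _ hsS
    rw [hS] at hsS
    rw [hg]
    have hkT : 0 < k*T := by positivity
    set q := s / (k*T) with hqd
    set r := (s % (k*T)) / T with hrd
    set a := s % T with had
    clear_value q r a
    have hq : q < k := by
      rw [hqd]
      apply Nat.div_lt_of_lt_mul
      have e : (k*T)*k = k^2*T := by ring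
      omega
    have hr : r < k := by
      rw [hrd]
      apply Nat.div_lt_of_lt_mul
      have h1 : s % (k*T) < k*T := Nat.mod_lt _ hkT
      have h2 : T*k = k*T := by ring
      omega
    have ha : a < T := by rw [had]; exact Nat.mod_lt _ hTpos
    have hdecomp : s = a + r*T + q*(k*T) := by
      rw [hqd, hrd, had]
      have d1 := Nat.div_add_mod s (k*T)
      have d2 := Nat.div_add_mod (s % (k*T)) T
      have d3 : s % (k*T) % T = s % T := Nat.mod_mod_of_dvd s ⟨k, by ring⟩
      have c1 : (k*T)*(s/(k*T)) = s/(k*T)*(k*T) := by ring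
      have c2 : T*(s%(k*T)/T) = (s%(k*T)/T)*T := by ring
      omega
    obtain ⟨x, y, hxy, hyn, hav⟩ := aVal_surj n T a hT2 ha
    have hblk : ∀ B u, B < b → u ≤ n → B*(n+1)+u < b*(n+1) := by
      intro B u hB hu
      have e1 : (B+1)*(n+1) ≤ b*(n+1) := Nat.mul_le_mul_right _ (by omega)
      have e2 : (B+1)*(n+1) = B*(n+1)+(n+1) := by ring
      omega
    have hrowb : ∀ p, p < b*(n+1) → k*p + r < K := by
      intro p hp
      have e1 : k*(p+1) ≤ k*(b*(n+1)) := Nat.mul_le_mul_left _ (by omega)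
      have e2 : k*(p+1) = k*p + k := by ring
      omega
    have hcolb : ∀ w, w < K/k → w + q*(K/k) < K := by
      intro w hw
      have e1 : (q+1)*(K/k) ≤ k*(K/k) := Nat.mul_le_mul_right _ (by omega)
      have e2 : (q+1)*(K/k) = q*(K/k) + K/k := by ring
      have e4 : k*(K/k) = K := by rw [hKk]; exact hK.symm
      omega
    have hrowdm : ∀ p : ℕ, (k*p + r)/k = p ∧ (k*p + r)%k = r := fun p =>
      ⟨by rw [Nat.mul_add_div hk, Nat.div_eq_of_lt hr, Nat.add_zero],
       by rw [Nat.mul_add_mod, Nat.mod_eq_of_lt hr]⟩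
    have hcoldm : ∀ w, w < K/k → (w + q*(K/k)) % (K/k) = w ∧ (w + q*(K/k))/(K/k) = q :=
      fun w hw =>
      ⟨by rw [Nat.add_mul_mod_self_right, Nat.mod_eq_of_lt hw],
       by rw [Nat.add_mul_div_right _ _ hKdk, Nat.div_eq_of_lt hw, Nat.zero_add]⟩
    have hset : ((Finset.range K) ×ˢ (Finset.range K)).filter
          (fun p => Pfull K k L p.1 p.2 = some s) =
        (Finset.range (2*b)).image (fun c =>
          if c % 2 = 0 then (k*((c/2)*(n+1)+x) + r, (c/2)*(n+1)+y + q*(K/k))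
          else (k*((c/2)*(n+1)+y) + r, ((c/2+1)%b)*(n+1)+x + q*(K/k))) := by
      ext ⟨i, j⟩
      simp only [Finset.mem_filter, Finset.mem_product, Finset.mem_range, Finset.mem_image]
      constructor
      · rintro ⟨⟨hi, hj⟩, hsome⟩
        obtain ⟨a', hP, he⟩ := (someChar i j s).1 hsome
        obtain ⟨haa, hrr, hqq⟩ := uniq a' (i%k) (j/(K/k)) a r q
          (haT (hdivF i hi) (hmodF j) hP) ha (Nat.mod_lt _ hk) hr (hdivq j hj) hq
          (by rw [← he, ← hdecomp])
        rw [haa] at hP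
        rcases (P1_some_iff n b hb' (hdivF i hi) (hmodF j)).1 hP with
          ⟨B, hB, x', y', hxy', hyn', ha', hpe, hce⟩ |
          ⟨B, hB, x', y', hxy', hyn', ha', hpe, hce⟩
        · obtain ⟨rfl, rfl⟩ :=
            aVal_inj n x' y' x y hxy' hyn' hxy hyn (ha'.symm.trans hav.symm)
          refine ⟨2*B, by omega, ?_⟩
          have hc2 : (2*B)%2 = 0 := by omega
          have hc3 : (2*B)/2 = B := by omega
          rw [if_pos hc2, hc3, Prod.mk.injEq]
          constructor
          · rw [← hpe, ← hrr]; exact Nat.div_add_mod i k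
          · rw [← hce, ← hqq]; exact Nat.mod_add_div' j (K/k)
        · obtain ⟨rfl, rfl⟩ :=
            aVal_inj n x' y' x y hxy' hyn' hxy hyn (ha'.symm.trans hav.symm)
          refine ⟨2*B+1, by omega, ?_⟩
          have hc2 : ¬((2*B+1)%2 = 0) := by omega
          have hc3 : (2*B+1)/2 = B := by omega
          rw [if_neg hc2, hc3, Prod.mk.injEq]
          constructor
          · rw [← hpe, ← hrr]; exact Nat.div_add_mod i k
          · rw [← hce, ← hqq]; exact Nat.mod_add_div' j (K/k)
      · rintro ⟨c, hc, hfc⟩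
        have hB : c/2 < b := by omega
        have hpar : c % 2 = 0 ∨ c % 2 = 1 := by omega
        rcases hpar with h0 | h1
        · rw [if_pos h0, Prod.mk.injEq] at hfc
          obtain ⟨h1, h2⟩ := hfc
          have hpF : (c/2)*(n+1)+x < b*(n+1) := hblk _ x hB (by omega)
          have hcF : (c/2)*(n+1)+y < K/k := by rw [hKk]; exact hblk _ y hB hyn
          refine ⟨⟨?_, ?_⟩, ?_⟩
          · rw [← h1]; exact hrowb _ hpF
          · rw [← h2]; exact hcolb _ hcF
          · rw [someChar]
            refine ⟨a, ?_, ?_⟩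
            · rw [← h1, ← h2, (hrowdm _).1, (hcoldm _ hcF).1]
              refine (P1_some_iff n b hb' hpF (by rw [← hKk]; exact hcF)).2
                (Or.inl ⟨c/2, hB, x, y, hxy, hyn, hav.symm, rfl, rfl⟩)
            · rw [← h1, ← h2, (hrowdm _).2, (hcoldm _ hcF).2]
              exact hdecomp
        · rw [if_neg (by omega), Prod.mk.injEq] at hfc
          obtain ⟨h1, h2⟩ := hfc
          have hpF : (c/2)*(n+1)+y < b*(n+1) := hblk _ y hB hyn
          have hcF : ((c/2+1)%b)*(n+1)+x < K/k := by
            rw [hKk]; exact hblk _ x (bsucc_lt (by omega)) (by omega)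
          refine ⟨⟨?_, ?_⟩, ?_⟩
          · rw [← h1]; exact hrowb _ hpF
          · rw [← h2]; exact hcolb _ hcF
          · rw [someChar]
            refine ⟨a, ?_, ?_⟩
            · rw [← h1, ← h2, (hrowdm _).1, (hcoldm _ hcF).1]
              refine (P1_some_iff n b hb' hpF (by rw [← hKk]; exact hcF)).2
                (Or.inr ⟨c/2, hB, x, y, hxy, hyn, hav.symm, rfl, rfl⟩)
            · rw [← h1, ← h2, (hrowdm _).2, (hcoldm _ hcF).2]
              exact hdecomp
    rw [hset, Finset.card_image_of_injOn, Finset.card_range]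
    intro c hc c' hc' hcc
    simp only [Finset.mem_coe, Finset.mem_range] at hc hc'
    beta_reduce at hcc
    have hpar : c % 2 = 0 ∨ c % 2 = 1 := by omega
    have hpar' : c' % 2 = 0 ∨ c' % 2 = 1 := by omega
    rcases hpar with h0 | h1 <;> rcases hpar' with h0' | h1'
    · rw [if_pos h0, if_pos h0', Prod.mk.injEq] at hcc
      have e1 : (c/2)*(n+1)+x = (c'/2)*(n+1)+x :=
        Nat.eq_of_mul_eq_mul_left hk (by omega)
      have := (blocks_inj (by omega) (by omega) e1).1
      omega
    · have hn0 : ¬(c' % 2 = 0) := by omega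
      rw [if_pos h0, if_neg hn0, Prod.mk.injEq] at hcc
      have e1 : (c/2)*(n+1)+x = (c'/2)*(n+1)+y :=
        Nat.eq_of_mul_eq_mul_left hk (by omega)
      have := (blocks_inj (by omega) hyn e1).2
      omega
    · have hn0 : ¬(c % 2 = 0) := by omega
      rw [if_neg hn0, if_pos h0', Prod.mk.injEq] at hcc
      have e1 : (c/2)*(n+1)+y = (c'/2)*(n+1)+x :=
        Nat.eq_of_mul_eq_mul_left hk (by omega)
      have := (blocks_inj hyn (by omega) e1).2
      omega
    · have hn0 : ¬(c % 2 = 0) := by omega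
      have hn0' : ¬(c' % 2 = 0) := by omega
      rw [if_neg hn0, if_neg hn0', Prod.mk.injEq] at hcc
      have e1 : (c/2)*(n+1)+y = (c'/2)*(n+1)+y :=
        Nat.eq_of_mul_eq_mul_left hk (by omega)
      have := (blocks_inj hyn hyn e1).1
      omega

  · -- cyclic
    refine ⟨fun j => k*(j % (K/k)), fun j hj i hi => starChar i hi j hj, ?_⟩
    intro j hj
    show k * ((j+1) % (K/k)) % K = (k * (j % (K/k)) + k) % K
    have hjm : j % (K/k) < K/k := Nat.mod_lt _ hKdk
    rcases Nat.lt_or_ge (j % (K/k) + 1) (K/k) with hc|hc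
    · have e0 : j + 1 = (j%(K/k) + 1) + (j/(K/k))*(K/k) := by
        have := Nat.mod_add_div' j (K/k)
        omega
      rw [e0, Nat.add_mul_mod_self_right, Nat.mod_eq_of_lt hc]
      have e1 : k*(j%(K/k)+1) = k*(j%(K/k)) + k := by ring
      rw [e1]
    · have hc' : j % (K/k) + 1 = K/k := by omega
      have e00 : (j/(K/k)+1)*(K/k) = (j/(K/k))*(K/k) + (K/k) := by ring
      have e0 : j + 1 = 0 + (j/(K/k) + 1)*(K/k) := by
        have := Nat.mod_add_div' j (K/k)
        omega
      rw [e0, Nat.add_mul_mod_self_right]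
      have e2 : k*(j%(K/k)) + k = k*(j%(K/k)+1) := by ring
      have e3 : k*(K/k) = K := by rw [hKk]; exact hK.symm
      have e1 : k*(j%(K/k)) + k = K := by rw [e2, hc', e3]
      rw [e1]
      simp
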